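/- arXiv:1505.03555 — 9 statements merged into one kernel-verified Lean document; each statement's English description precedes it below -/
import Mathlib

section
/- Consider the no-agreement congestion game with N subscribers, M content providers, common demand φ > 0, congestion parameter a > 0, in which every content provider charges the same price p ≥ 0. Then the symmetric profile in which every subscriber n sends x_n^m = φ/M to every content provider m is the unique Nash equilibrium of the game. -/
open Finset

/-- A strategy of a subscriber is feasible if it is nonnegative and sums to the demand `φ`. -/
def Feasible (M : ℕ) (φ : ℝ) (v : Fin M → ℝ) : Prop :=
  (∀ m, 0 ≤ v m) ∧ ∑ m, v m = φ

/-- Cost of subscriber `n` in the no-agreement congestion game with linear preference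
cost `D(t) = a·t` and prices `p`. -/
noncomputable def cost (N M : ℕ) (a : ℝ) (p : Fin M → ℝ)
    (x : Fin N → Fin M → ℝ) (n : Fin N) : ℝ :=
  ∑ m, x n m * (a * (∑ n', x n' m) + p m)

/-- Nash equilibrium of the no-agreement congestion game: every subscriber's strategy is
feasible and no subscriber can decrease its cost by a unilateral feasible deviation. -/
def IsNash (N M : ℕ) (φ a : ℝ) (p : Fin M → ℝ) (x : Fin N → Fin M → ℝ) : Prop :=
  (∀ n, Feasible M φ (x n)) ∧
  ∀ (n : Fin N) (y : Fin M → ℝ), Feasible M φ y →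
    cost N M a p x n ≤ cost N M a p (Function.update x n y) n

lemma sum_update_fun {N : ℕ} (g : Fin N → ℝ) (n : Fin N) (c : ℝ) :
    ∑ n', Function.update g n c n' = (∑ n', g n') + (c - g n) := by
  have h : ∀ n', Function.update g n c n' = g n' + (if n' = n then c - g n else 0) := by
    intro n'
    by_cases h : n' = n
    · subst h; simp
    · simp [Function.update_of_ne h, h]
  simp_rw [h, Finset.sum_add_distrib, Finset.sum_ite_eq']
  simp

lemma cost_update (N M : ℕ) (a : ℝ) (p : Fin M → ℝ) (x : Fin N → Fin M → ℝ)
    (n : Fin N) (y : Fin M → ℝ) :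
    cost N M a p (Function.update x n y) n
      = ∑ m, y m * (a * ((∑ n', x n' m) + (y m - x n m)) + p m) := by
  have h2 : ∀ m, (∑ n', Function.update x n y n' m) = (∑ n', x n' m) + (y m - x n m) := by
    intro m
    have h3 : ∀ n', Function.update x n y n' m = Function.update (fun k => x k m) n (y m) n' := by
      intro n'; by_cases h : n' = n <;> simp [h, Function.update]
    simp_rw [h3, sum_update_fun]
  simp only [cost, Function.update_self, h2]

lemma nash_support {N M : ℕ} {φ a : ℝ} {p : Fin M → ℝ} {x : Fin N → Fin M → ℝ}
    (ha : 0 < a) (hx : IsNash N M φ a p x) (n : Fin N) (m1 m2 : Fin M)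
    (hpos : 0 < x n m2) :
    a * (x n m2 + ∑ n', x n' m2) + p m2 ≤ a * (x n m1 + ∑ n', x n' m1) + p m1 := by
  by_contra hlt
  push_neg at hlt
  have hne : m1 ≠ m2 := by rintro rfl; exact lt_irrefl _ hlt
  set S : Fin M → ℝ := fun m => ∑ n', x n' m with hSdef
  set h : Fin M → ℝ := fun m => a * (x n m + S m) + p m with hhdef
  have hd : h m1 < h m2 := hlt
  set d : ℝ := h m1 - h m2 with hddef
  have hdneg : d < 0 := sub_neg.mpr hd
  have hq : 0 < -d / (4 * a) := div_pos (by linarith) (by linarith)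
  set ε : ℝ := min (x n m2) (-d / (4 * a)) with hεdef
  have hε0 : 0 < ε := lt_min hpos hq
  have hε2 : ε ≤ x n m2 := min_le_left _ _
  have hε3 : ε ≤ -d / (4 * a) := min_le_right _ _
  set u : Fin M → ℝ := fun m => (if m = m1 then ε else 0) - (if m = m2 then ε else 0) with hudef
  set y : Fin M → ℝ := fun m => x n m + u m with hydef
  have hyfeas : Feasible M φ y := by
    constructor
    · intro m
      by_cases e1 : m = m1
      · subst e1
        have := (hx.1 n).1 m
        simp [hydef, hudef, hne]
        linarith [hε0.le]
      · by_cases e2 : m = m2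
        · subst e2
          simp [hydef, hudef, e1]
          linarith
        · simp [hydef, hudef, e1, e2]
          exact (hx.1 n).1 m
    · have hsum_u : ∑ m, u m = 0 := by
        simp [hudef, Finset.sum_sub_distrib, Finset.sum_ite_eq']
      have : ∑ m, y m = (∑ m, x n m) + ∑ m, u m := by
        simp [hydef, Finset.sum_add_distrib]
      rw [this, hsum_u, add_zero, (hx.1 n).2]
  have hnash := hx.2 n y hyfeas
  rw [cost_update] at hnash
  have hterm : ∀ m, y m * (a * (S m + (y m - x n m)) + p m)
      = x n m * (a * S m + p m) + u m * h m + a * (u m) ^ 2 := by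
    intro m
    simp only [hydef, hhdef]
    ring
  have hsum_uh : ∑ m, u m * h m = ε * (h m1 - h m2) := by
    simp only [hudef, sub_mul, ite_mul, zero_mul]
    rw [Finset.sum_sub_distrib]
    simp [Finset.sum_ite_eq']
    ring
  have hsq : ∀ m, (u m) ^ 2 = (if m = m1 then ε ^ 2 else 0) + (if m = m2 then ε ^ 2 else 0) := by
    intro m
    by_cases e1 : m = m1
    · have e2 : ¬ m = m2 := by rw [e1]; exact hne
      simp only [hudef, if_pos e1, if_neg e2]
      ring
    · by_cases e2 : m = m2
      · simp only [hudef, if_neg e1, if_pos e2]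
        ring
      · simp only [hudef, if_neg e1, if_neg e2]
        ring
  have hsum_sq : ∑ m, (u m) ^ 2 = 2 * ε ^ 2 := by
    simp_rw [hsq]
    rw [Finset.sum_add_distrib]
    simp [Finset.sum_ite_eq']
    ring
  have hnew : ∑ m, y m * (a * (S m + (y m - x n m)) + p m)
      = cost N M a p x n + ε * d + a * (2 * ε ^ 2) := by
    simp_rw [hterm]
    rw [Finset.sum_add_distrib, Finset.sum_add_distrib, hsum_uh, ← Finset.mul_sum, hsum_sq]
    simp only [cost, hddef]
    rfl
  rw [hnew] at hnash
  have hcontr : ε * d + a * (2 * ε ^ 2) < 0 := by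
    have h1 : 2 * a * ε ≤ -d / 2 := by
      have := mul_le_mul_of_nonneg_left hε3 (by linarith : (0:ℝ) ≤ 4 * a)
      rw [mul_div_cancel₀] at this
      · linarith
      · positivity
    nlinarith
  linarith

/-- with uniform price `p`, the symmetric profile `x_n^m = φ/M` is
the unique Nash equilibrium. -/
theorem stmt0 (N M : ℕ) (hN : 1 ≤ N) (hM : 1 ≤ M) (φ a p : ℝ)
    (hφ : 0 < φ) (ha : 0 < a) (hp : 0 ≤ p) (x : Fin N → Fin M → ℝ) :
    IsNash N M φ a (fun _ => p) x ↔ x = fun _ _ => φ / M := by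
  have hMpos : (0:ℝ) < M := by exact_mod_cast hM
  constructor
  · intro hx
    have hfeas := hx.1
    have key : ∀ (n : Fin N) (m1 m2 : Fin M), 0 < x n m2 →
        x n m2 + (∑ n', x n' m2) ≤ x n m1 + (∑ n', x n' m1) := by
      intro n m1 m2 h2
      have := nash_support ha hx n m1 m2 h2
      nlinarith
    have hSnn : ∀ m, (0:ℝ) ≤ ∑ n', x n' m :=
      fun m => Finset.sum_nonneg fun n' _ => (hfeas n').1 m
    have hSle : ∀ m1 m2 : Fin M, (∑ n', x n' m1) ≤ ∑ n', x n' m2 := by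
      intro m1 m2
      by_contra hlt
      push_neg at hlt
      have hSpos : 0 < ∑ n', x n' m1 := lt_of_le_of_lt (hSnn m2) hlt
      have hex : ∃ n0, 0 < x n0 m1 := by
        by_contra hno
        push_neg at hno
        have : (∑ n', x n' m1) ≤ 0 := Finset.sum_nonpos fun n' _ => hno n'
        linarith
      obtain ⟨n0, hn0⟩ := hex
      have hstrict : (∑ n', x n' m1) < ∑ n', x n' m2 := by
        refine Finset.sum_lt_sum (fun n _ => ?_) ⟨n0, Finset.mem_univ n0, ?_⟩
        · by_cases h : 0 < x n m1
          · have := key n m2 m1 h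
            linarith
          · push_neg at h
            have h1 := (hfeas n).1 m1
            have h2 := (hfeas n).1 m2
            linarith
        · have := key n0 m2 m1 hn0
          linarith
      linarith
    have hSeq : ∀ m1 m2 : Fin M, (∑ n', x n' m1) = ∑ n', x n' m2 :=
      fun m1 m2 => le_antisymm (hSle m1 m2) (hSle m2 m1)
    have hxpos : ∀ n m, 0 < x n m := by
      intro n m
      by_contra h
      push_neg at h
      have h0 : x n m = 0 := le_antisymm h ((hfeas n).1 m)
      have hex : ∃ m2, 0 < x n m2 := by
        by_contra hno
        push_neg at hno
        have : (∑ m', x n m') ≤ 0 := Finset.sum_nonpos fun m' _ => hno m'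
        rw [(hfeas n).2] at this
        linarith
      obtain ⟨m2, hm2⟩ := hex
      have := key n m m2 hm2
      have hS := hSeq m2 m
      linarith
    have hxeq : ∀ n (m1 m2 : Fin M), x n m1 = x n m2 := by
      intro n m1 m2
      have h1 := key n m1 m2 (hxpos n m2)
      have h2 := key n m2 m1 (hxpos n m1)
      have e1 := hSeq m1 m2
      linarith
    funext n m
    have hsum : ∑ m', x n m' = φ := (hfeas n).2
    have hMx : (M:ℝ) * x n m = φ := by
      rw [← hsum]
      rw [Finset.sum_congr rfl (fun m' _ => hxeq n m' m)]
      simp [Finset.sum_const, Finset.card_univ, mul_comm]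
    field_simp
    linarith
  · rintro rfl
    have hsumN : (∑ _n' : Fin N, φ / M) = (N:ℝ) * (φ / M) := by
      simp [Finset.sum_const, Finset.card_univ, mul_comm]
    have hsumM : (∑ _m : Fin M, φ / M) = φ := by
      simp [Finset.sum_const, Finset.card_univ]
      field_simp
    constructor
    · intro n
      exact ⟨fun m => by positivity, hsumM⟩
    · intro n y hy
      rw [cost_update]
      have hterm : ∀ m, y m * (a * ((∑ _n' : Fin N, φ / M) + (y m - φ / M)) + p)
          = a * (y m) ^ 2 + y m * (a * ((N:ℝ) * (φ / M)) - a * (φ / M) + p) := by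
        intro m
        rw [hsumN]
        ring
      have hnew : (∑ m, y m * (a * ((∑ _n' : Fin N, φ / M) + (y m - φ / M)) + p))
          = a * (∑ m, (y m) ^ 2) + φ * (a * ((N:ℝ) * (φ / M)) - a * (φ / M) + p) := by
        simp_rw [hterm]
        rw [Finset.sum_add_distrib, ← Finset.mul_sum, ← Finset.sum_mul, hy.2]
      rw [hnew]
      have hold : cost N M a (fun _ => p) (fun _ _ => φ / M) n
          = (M:ℝ) * ((φ / M) * (a * ((N:ℝ) * (φ / M)) + p)) := by
        simp only [cost, hsumN]
        simp [Finset.sum_const, Finset.card_univ, mul_comm]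
      rw [hold]
      have hcs : φ ^ 2 / M ≤ ∑ m, (y m) ^ 2 := by
        have h0 : (0:ℝ) ≤ ∑ m, (y m - φ / M) ^ 2 :=
          Finset.sum_nonneg fun m _ => sq_nonneg _
        have hexp : (∑ m, (y m - φ / M) ^ 2)
            = (∑ m, (y m) ^ 2) - 2 * (φ / M) * φ + (M:ℝ) * (φ / M) ^ 2 := by
          have hpt : ∀ m, (y m - φ / M) ^ 2
              = (y m) ^ 2 - (2 * (φ / M)) * y m + (φ / M) ^ 2 := fun m => by ring
          simp_rw [hpt]
          rw [Finset.sum_add_distrib, Finset.sum_sub_distrib, ← Finset.mul_sum, hy.2]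
          simp only [Finset.sum_const, Finset.card_univ, Fintype.card_fin, nsmul_eq_mul]
        rw [hexp] at h0
        have : (M:ℝ) * (φ / M) ^ 2 = φ ^ 2 / M := by field_simp
        rw [this] at h0
        have h2 : 2 * (φ / M) * φ = 2 * (φ ^ 2 / M) := by field_simp
        rw [h2] at h0
        linarith
      have hQ : φ ^ 2 / M = φ * (φ / M) := by ring
      rw [hQ] at hcs
      have key := mul_le_mul_of_nonneg_left hcs ha.le
      have hMφ : (M:ℝ) * (φ / M) = φ := by field_simp
      have hL : (M:ℝ) * ((φ / M) * (a * ((N:ℝ) * (φ / M)) + p))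
          = ((M:ℝ) * (φ / M)) * (a * ((N:ℝ) * (φ / M)) + p) := by ring
      rw [hL, hMφ]
      nlinarith [key]
end

section
/- Consider the no-agreement congestion game with N ≥ 1 subscribers, M ≥ 2 content providers, demand φ > 0 and congestion parameter a > 0, where CP 1 charges price p ≥ 0 and every CP m ∈ {2,…,M} charges price q ≥ 0. Assume −aφ(N+1) ≤ p − q ≤ aφ(N+1)/(M−1). Then the profile in which every subscriber sends y = φ/M − (M−1)(p−q)/(M·a·(N+1)) to CP 1 and x = φ/M + (p−q)/(M·a·(N+1)) to each CP m ∈ {2,…,M} is a Nash equilibrium of the game (and the assumed inequalities guarantee y ≥ 0 and x ≥ 0). -/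
open Finset

lemma sum_ite_eq_add (K : ℕ) (k0 : Fin K) (A B : ℝ) :
    ∑ m : Fin K, (if m = k0 then A else B) = A + ((K : ℝ) - 1) * B := by
  rw [← Finset.add_sum_erase _ _ (Finset.mem_univ k0), if_pos rfl]
  congr 1
  have h1 : ∀ m ∈ Finset.univ.erase k0, (if m = k0 then A else B) = B := by
    intro m hm; rw [if_neg (Finset.mem_erase.mp hm).1]
  rw [Finset.sum_congr rfl h1, Finset.sum_const,
    Finset.card_erase_of_mem (Finset.mem_univ k0), Finset.card_univ, Fintype.card_fin,
    nsmul_eq_mul]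
  have hK : 1 ≤ K := k0.pos
  have : ((K - 1 : ℕ) : ℝ) = (K : ℝ) - 1 := by push_cast [hK]; ring
  rw [this]

/-- with CP 1 charging `p` and all other CPs charging `q`, under the stated
bounds on `p − q`, the symmetric profile sending
`y = φ/M − (M−1)(p−q)/(M·a·(N+1))` to CP 1 and `x = φ/M + (p−q)/(M·a·(N+1))` to every
other CP is a Nash equilibrium, and these flows are nonnegative. -/
theorem stmt1 (N M : ℕ) (hN : 1 ≤ N) (hM : 2 ≤ M) (φ a p q : ℝ)
    (hφ : 0 < φ) (ha : 0 < a) (hp : 0 ≤ p) (hq : 0 ≤ q)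
    (hlo : -(a * φ * ((N : ℝ) + 1)) ≤ p - q)
    (hhi : p - q ≤ a * φ * ((N : ℝ) + 1) / ((M : ℝ) - 1)) :
    0 ≤ φ / M - ((M : ℝ) - 1) * (p - q) / ((M : ℝ) * a * ((N : ℝ) + 1)) ∧
    0 ≤ φ / M + (p - q) / ((M : ℝ) * a * ((N : ℝ) + 1)) ∧
    IsNash N M φ a
      (fun m => if m = (⟨0, by omega⟩ : Fin M) then p else q)
      (fun _ m => if m = (⟨0, by omega⟩ : Fin M) then
          φ / M - ((M : ℝ) - 1) * (p - q) / ((M : ℝ) * a * ((N : ℝ) + 1))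
        else
          φ / M + (p - q) / ((M : ℝ) * a * ((N : ℝ) + 1))) := by
  have hMr : (2:ℝ) ≤ (M:ℝ) := by exact_mod_cast hM
  have hNr : (1:ℝ) ≤ (N:ℝ) := by exact_mod_cast hN
  have hM0 : (0:ℝ) < (M:ℝ) := by linarith
  have hM1 : (0:ℝ) < (M:ℝ) - 1 := by linarith
  have hN1 : (0:ℝ) < (N:ℝ) + 1 := by linarith
  have hc : (0:ℝ) < (M:ℝ) * a * ((N:ℝ) + 1) := by positivity
  set m0 : Fin M := ⟨0, by omega⟩ with hm0
  set c : ℝ := (M:ℝ) * a * ((N:ℝ) + 1) with hcdef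
  set y0 : ℝ := φ / M - ((M:ℝ) - 1) * (p - q) / c with hy0def
  set x0 : ℝ := φ / M + (p - q) / c with hx0def
  have hmul : (p - q) * ((M:ℝ) - 1) ≤ a * φ * ((N:ℝ) + 1) := (le_div_iff₀ hM1).mp hhi
  have hy0n : 0 ≤ y0 := by
    rw [hy0def, sub_nonneg, div_le_div_iff₀ hc hM0]
    nlinarith [mul_le_mul_of_nonneg_right hmul hM0.le]
  have hx0n : 0 ≤ x0 := by
    have key : 0 ≤ φ * c + (p - q) * (M:ℝ) := by
      have := mul_le_mul_of_nonneg_right hlo hM0.le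
      rw [hcdef]; nlinarith
    have heq : x0 = (φ * c + (p - q) * (M:ℝ)) / ((M:ℝ) * c) := by
      rw [hx0def]; field_simp
    rw [heq]
    exact div_nonneg key (by positivity)
  set X : Fin M → ℝ := fun m => if m = m0 then y0 else x0 with hX
  set P : Fin M → ℝ := fun m => if m = m0 then p else q with hP
  have hsumX : ∑ m, X m = φ := by
    rw [hX]
    rw [sum_ite_eq_add M m0 y0 x0, hy0def, hx0def]
    field_simp
    ring
  set K : ℝ := a * ((N:ℝ) + 1) * x0 + q with hK
  have hKconst : ∀ m, a * ((N:ℝ) + 1) * X m + P m = K := by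
    intro m
    rw [hX, hP, hK]
    by_cases h : m = m0
    · simp only [if_pos h]
      rw [hy0def, hx0def, hcdef]
      field_simp
      ring
    · simp only [if_neg h]
  refine ⟨hy0n, hx0n, ?_, ?_⟩
  · intro n
    refine ⟨fun m => ?_, hsumX⟩
    simp only [hX]
    split <;> assumption
  · intro n y hy
    obtain ⟨hyn, hys⟩ := hy
    have hsum_prof : ∀ m, ∑ n' : Fin N, X m = (N:ℝ) * X m := by
      intro m
      rw [Finset.sum_const, Finset.card_univ, Fintype.card_fin, nsmul_eq_mul]
    have hcost_x : cost N M a P (fun _ => X) n = ∑ m, X m * (a * ((N:ℝ) * X m) + P m) := by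
      unfold cost
      exact Finset.sum_congr rfl fun m _ => by rw [hsum_prof m]
    have hsum_upd : ∀ m, ∑ n', Function.update (fun _ => X) n y n' m
        = y m + ((N:ℝ) - 1) * X m := by
      intro m
      have : ∀ n' : Fin N, Function.update (fun _ => X) n y n' m
          = if n' = n then y m else X m := by
        intro n'
        rw [Function.update_apply]
        split <;> rfl
      rw [Finset.sum_congr rfl fun n' _ => this n', sum_ite_eq_add N n (y m) (X m)]
    have hcost_y : cost N M a P (Function.update (fun _ => X) n y) n
        = ∑ m, y m * (a * (y m + ((N:ℝ) - 1) * X m) + P m) := by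
      unfold cost
      refine Finset.sum_congr rfl fun m _ => ?_
      rw [Function.update_self, hsum_upd m]
    have hdiff : cost N M a P (Function.update (fun _ => X) n y) n
        - cost N M a P (fun _ => X) n
        = ∑ m, (a * (y m - X m) ^ 2 + K * (y m - X m)) := by
      rw [hcost_x, hcost_y, ← Finset.sum_sub_distrib]
      refine Finset.sum_congr rfl fun m _ => ?_
      linear_combination (y m - X m) * hKconst m
    have hsq : 0 ≤ ∑ m, a * (y m - X m) ^ 2 :=
      Finset.sum_nonneg fun m _ => by positivity
    have hsplit : ∑ m, (a * (y m - X m) ^ 2 + K * (y m - X m))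
        = (∑ m, a * (y m - X m) ^ 2) + K * ((∑ m, y m) - ∑ m, X m) := by
      simp only [Finset.sum_add_distrib, ← Finset.mul_sum, Finset.sum_sub_distrib]
    rw [hsplit, hys, hsumX, sub_self, mul_zero, add_zero] at hdiff
    linarith
end

section
/- In the no-agreement congestion game with N subscribers, M content providers, demand φ > 0 and congestion parameter a > 0, if all content providers charge the same price p ≥ 0, then at every Nash equilibrium the total traffic into each content provider m is the same and equals Σ_{n=1}^N x_n^m = N·φ/M. -/
open Finset

lemma key (N M : ℕ) (φ a p : ℝ) (ha : 0 < a)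
    (x : Fin N → Fin M → ℝ) (hx : IsNash N M φ a (fun _ => p) x)
    (n : Fin N) (k l : Fin M) (hkl : k ≠ l) (hl : 0 < x n l) :
    x n l + ∑ n', x n' l ≤ x n k + ∑ n', x n' k := by
  by_contra hcon
  push_neg at hcon
  set D : ℝ := (x n l + ∑ n', x n' l) - (x n k + ∑ n', x n' k) with hD
  have hDpos : 0 < D := by simp only [hD]; linarith
  set ε : ℝ := min (x n l) (D / 4) with hε
  have hεpos : 0 < ε := lt_min hl (by linarith)
  have hεl : ε ≤ x n l := min_le_left _ _
  have hεD : ε ≤ D / 4 := min_le_right _ _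
  set y : Fin M → ℝ := fun m => if m = k then x n k + ε else if m = l then x n l - ε else x n m with hy
  have hyk : y k = x n k + ε := by simp [hy]
  have hyl : y l = x n l - ε := by simp [hy, hkl.symm, Ne.symm hkl]
  have hym : ∀ m, m ≠ k → m ≠ l → y m = x n m := by
    intro m h1 h2; simp [hy, h1, h2]
  have split : ∀ f : Fin M → ℝ, ∑ m, f m = f k + f l + ∑ m ∈ (univ.erase k).erase l, f m := by
    intro f
    rw [add_assoc, Finset.add_sum_erase _ f (Finset.mem_erase.mpr ⟨Ne.symm hkl, mem_univ l⟩),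
      Finset.add_sum_erase _ f (mem_univ k)]
  have hfeas : Feasible M φ y := by
    constructor
    · intro m
      rcases eq_or_ne m k with h | h
      · rw [h, hyk]; have := (hx.1 n).1 k; linarith
      rcases eq_or_ne m l with h2 | h2
      · rw [h2, hyl]; linarith
      · rw [hym m h h2]; exact (hx.1 n).1 m
    · have h1 := (hx.1 n).2
      rw [split (x n)] at h1
      rw [split y, hyk, hyl]
      have : ∑ m ∈ (univ.erase k).erase l, y m = ∑ m ∈ (univ.erase k).erase l, x n m := by
        apply Finset.sum_congr rfl
        intro m hm
        rw [Finset.mem_erase, Finset.mem_erase] at hm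
        exact hym m hm.2.1 hm.1
      rw [this]; linarith
  have hinner : ∀ m, ∑ n', Function.update x n y n' m = (∑ n', x n' m) - x n m + y m := by
    intro m
    have h1 : ∀ n', Function.update x n y n' m = Function.update (fun i => x i m) n (y m) n' := by
      intro n'
      rcases eq_or_ne n' n with h | h
      · subst h; simp
      · simp [Function.update_of_ne h]
    simp only [h1]
    rw [Finset.sum_update_of_mem (mem_univ n),
      Finset.sum_sdiff_eq_sub (Finset.subset_univ {n}), Finset.sum_singleton]
    ring
  have hNash := hx.2 n y hfeas
  have hcost1 : cost N M a (fun _ => p) x n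
      = x n k * (a * ∑ n', x n' k + p) + x n l * (a * ∑ n', x n' l + p)
        + ∑ m ∈ (univ.erase k).erase l, x n m * (a * ∑ n', x n' m + p) := by
    rw [cost]; exact split _
  have hcost2 : cost N M a (fun _ => p) (Function.update x n y) n
      = y k * (a * ((∑ n', x n' k) - x n k + y k) + p)
        + y l * (a * ((∑ n', x n' l) - x n l + y l) + p)
        + ∑ m ∈ (univ.erase k).erase l, x n m * (a * ∑ n', x n' m + p) := by
    rw [cost, split]
    simp only [Function.update_self]
    rw [hinner k, hinner l]
    congr 1
    apply Finset.sum_congr rfl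
    intro m hm
    rw [Finset.mem_erase, Finset.mem_erase] at hm
    rw [hinner m, hym m hm.2.1 hm.1]
    ring
  rw [hcost1, hcost2, hyk, hyl] at hNash
  nlinarith [mul_pos (mul_pos ha hεpos) (show (0:ℝ) < D - 2 * ε by linarith)]

/-- with a uniform price `p`, at every Nash equilibrium of the no-agreement
congestion game the total traffic into each CP equals `N·φ/M`. -/
theorem stmt5 (N M : ℕ) (hN : 1 ≤ N) (hM : 1 ≤ M) (φ a p : ℝ)
    (hφ : 0 < φ) (ha : 0 < a) (hp : 0 ≤ p)
    (x : Fin N → Fin M → ℝ) (hx : IsNash N M φ a (fun _ => p) x) :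
    ∀ m : Fin M, ∑ n, x n m = (N : ℝ) * φ / M := by
  have hnonneg : ∀ n m, 0 ≤ x n m := fun n m => (hx.1 n).1 m
  have hTnn : ∀ m : Fin M, (0:ℝ) ≤ ∑ n, x n m :=
    fun m => Finset.sum_nonneg fun n _ => hnonneg n m
  have hle : ∀ k l : Fin M, (∑ n, x n l) ≤ ∑ n, x n k := by
    intro k l
    by_contra hcon
    push_neg at hcon
    have hkl : k ≠ l := fun h => by rw [h] at hcon; exact lt_irrefl _ hcon
    set A := univ.filter (fun n => 0 < x n l) with hA
    have hTl : ∑ n ∈ A, x n l = ∑ n, x n l := by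
      apply Finset.sum_filter_of_ne
      intro n _ hne
      exact lt_of_le_of_ne (hnonneg n l) (Ne.symm hne)
    have hAne : A.Nonempty := by
      by_contra h
      rw [Finset.not_nonempty_iff_eq_empty] at h
      have h0 : ∑ n ∈ A, x n l = 0 := by rw [h]; simp
      rw [hTl] at h0
      have hTk := hTnn k
      linarith
    set d : ℝ := (∑ n, x n l) - (∑ n, x n k) with hd
    have hdpos : 0 < d := by simp only [hd]; linarith
    have h2 : ∀ n ∈ A, x n l + d ≤ x n k := by
      intro n hn
      have hpos : 0 < x n l := (Finset.mem_filter.mp hn).2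
      have := key N M φ a p ha x hx n k l hkl hpos
      simp only [hd]; linarith
    have h3 : ∑ n ∈ A, (x n l + d) ≤ ∑ n ∈ A, x n k := Finset.sum_le_sum h2
    have h1 : ∑ n ∈ A, x n k ≤ ∑ n, x n k :=
      Finset.sum_le_sum_of_subset_of_nonneg (Finset.filter_subset _ _)
        (fun i _ _ => hnonneg i k)
    rw [Finset.sum_add_distrib, Finset.sum_const, nsmul_eq_mul, hTl] at h3
    have hcard : (1:ℝ) ≤ A.card := by
      exact_mod_cast Finset.card_pos.mpr hAne
    nlinarith
  have heq : ∀ k l : Fin M, (∑ n, x n k) = ∑ n, x n l :=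
    fun k l => le_antisymm (hle l k) (hle k l)
  intro m
  have hsum : ∑ m' : Fin M, ∑ n, x n m' = (N:ℝ) * φ := by
    rw [Finset.sum_comm]
    have : ∀ n : Fin N, ∑ m' : Fin M, x n m' = φ := fun n => (hx.1 n).2
    rw [Finset.sum_congr rfl (fun n _ => this n), Finset.sum_const, nsmul_eq_mul,
      Finset.card_univ, Fintype.card_fin]
  have hconst : ∑ m' : Fin M, ∑ n, x n m' = (M:ℝ) * ∑ n, x n m := by
    rw [Finset.sum_congr rfl (fun m' _ => heq m' m), Finset.sum_const, nsmul_eq_mul,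
      Finset.card_univ, Fintype.card_fin]
  have hM0 : (M:ℝ) ≠ 0 := by positivity
  field_simp
  linarith [hsum, hconst]
end

section
/- Consider the agreement congestion game with N ≥ 2 subscribers and N content providers, demand φ > 0 and congestion parameter a > 0, where every non-associated access is charged the same price q with 0 ≤ q ≤ aφ. Then the profile in which each subscriber n sends x_n^n = (φ + (N−1)q/a)/N to its associated CP n and x_n^m = (φ − q/a)/N to each CP m ≠ n is a Nash equilibrium. In particular, for q = aφ(N+1)/(3N−1) (which satisfies 0 ≤ q ≤ aφ), these flows equal ȳ = (φ/N)·(1 + (N−1)(N+1)/(3N−1)) and z̄ = (φ/N)·(2N−2)/(3N−1), respectively. -/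
open Finset

/-- Cost of subscriber `n` in the agreement congestion game: subscriber `n` pays nothing
per unit of traffic downloaded from its associated CP `n`, and pays `p m` per unit of
traffic from every other CP `m`; the preference (congestion) cost is linear, `D(t) = a·t`. -/
noncomputable def costV (N : ℕ) (a : ℝ) (p : Fin N → ℝ)
    (x : Fin N → Fin N → ℝ) (n : Fin N) : ℝ :=
  ∑ m, x n m * (a * (∑ n', x n' m) + if m = n then 0 else p m)

/-- Nash equilibrium of the agreement congestion game. -/
def IsNashV (N : ℕ) (φ a : ℝ) (p : Fin N → ℝ) (x : Fin N → Fin N → ℝ) : Prop :=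
  (∀ n, Feasible N φ (x n)) ∧
  ∀ (n : Fin N) (y : Fin N → ℝ), Feasible N φ y →
    costV N a p x n ≤ costV N a p (Function.update x n y) n

/-- with a uniform price `q ∈ [0, aφ]` for non-associated access, the profile
with `x_n^n = (φ + (N−1)q/a)/N` and `x_n^m = (φ − q/a)/N` for `m ≠ n` is a Nash equilibrium
of the agreement congestion game.  In particular, `q = aφ(N+1)/(3N−1)` lies in `[0, aφ]`
and the corresponding flows equal `ȳ = (φ/N)(1 + (N−1)(N+1)/(3N−1))` and
`z̄ = (φ/N)(2N−2)/(3N−1)`. -/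
theorem stmt6 (N : ℕ) (hN : 2 ≤ N) (φ a q : ℝ)
    (hφ : 0 < φ) (ha : 0 < a) (hq0 : 0 ≤ q) (hq1 : q ≤ a * φ) :
    IsNashV N φ a (fun _ => q)
      (fun n m => if m = n then (φ + ((N : ℝ) - 1) * q / a) / N else (φ - q / a) / N) ∧
    (0 ≤ a * φ * ((N : ℝ) + 1) / (3 * (N : ℝ) - 1) ∧
      a * φ * ((N : ℝ) + 1) / (3 * (N : ℝ) - 1) ≤ a * φ ∧
      (φ + ((N : ℝ) - 1) * (a * φ * ((N : ℝ) + 1) / (3 * (N : ℝ) - 1)) / a) / N =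
        (φ / N) * (1 + ((N : ℝ) - 1) * ((N : ℝ) + 1) / (3 * (N : ℝ) - 1)) ∧
      (φ - (a * φ * ((N : ℝ) + 1) / (3 * (N : ℝ) - 1)) / a) / N =
        (φ / N) * ((2 * (N : ℝ) - 2) / (3 * (N : ℝ) - 1))) := by
  have hNr2 : (2:ℝ) ≤ (N:ℝ) := by exact_mod_cast hN
  have hN0 : (0:ℝ) < (N:ℝ) := by linarith
  have hNne : (N:ℝ) ≠ 0 := ne_of_gt hN0
  have hane : a ≠ 0 := ne_of_gt ha
  set Y : ℝ := (φ + ((N : ℝ) - 1) * q / a) / N with hYdef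
  set Z : ℝ := (φ - q / a) / N with hZdef
  have hq' : q = a * Y - a * Z := by
    rw [hYdef, hZdef]; field_simp; ring
  have hZ0 : 0 ≤ Z := by
    have : q / a ≤ φ := by rw [div_le_iff₀ ha]; linarith [hq1]
    rw [hZdef]
    apply div_nonneg (by linarith) hN0.le
  have hY0 : 0 ≤ Y := by
    have hN1 : (0:ℝ) ≤ (N:ℝ) - 1 := by linarith
    have h1 : 0 ≤ ((N:ℝ) - 1) * q / a := div_nonneg (mul_nonneg hN1 hq0) ha.le
    rw [hYdef]; exact div_nonneg (by linarith) hN0.le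
  have hYZφ : Y + ((N:ℝ) - 1) * Z = φ := by
    rw [hYdef, hZdef]; field_simp; ring
  -- generic row sum
  have hsum1 : ∀ n : Fin N, ∑ j, (if j = n then Y else Z) = φ := by
    intro n
    have h : ∀ j : Fin N, (if j = n then Y else Z) = (if j = n then Y - Z else 0) + Z := by
      intro j; split <;> ring
    calc ∑ j, (if j = n then Y else Z) = ∑ j, ((if j = n then Y - Z else 0) + Z) := by
          exact Finset.sum_congr rfl fun j _ => h j
      _ = (Y - Z) + (N:ℝ) * Z := by
          rw [Finset.sum_add_distrib, Finset.sum_ite_eq' univ n (fun _ => Y - Z)]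
          simp [Finset.card_univ]
      _ = φ := by linarith [hYZφ]
  have hsum2 : ∀ m : Fin N, ∑ j, (if m = j then Y else Z) = φ := by
    intro m
    have : ∀ j : Fin N, (if m = j then Y else Z) = (if j = m then Y else Z) := by
      intro j
      rcases eq_or_ne m j with h | h
      · rw [if_pos h, if_pos h.symm]
      · rw [if_neg h, if_neg h.symm]
    rw [Finset.sum_congr rfl fun j _ => this j]
    exact hsum1 m
  set x : Fin N → Fin N → ℝ :=
    fun n m => if m = n then (φ + ((N : ℝ) - 1) * q / a) / N else (φ - q / a) / N with hxdef
  have hx : ∀ n m, x n m = if m = n then Y else Z := by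
    intro n m; rw [hxdef]
  have hfeas : ∀ n, Feasible N φ (x n) := by
    intro n
    constructor
    · intro m; rw [hx]; split
      · exact hY0
      · exact hZ0
    · calc ∑ m, x n m = ∑ m, (if m = n then Y else Z) :=
            Finset.sum_congr rfl fun m _ => hx n m
        _ = φ := hsum1 n
  -- column sums
  have hcol : ∀ m, ∑ n', x n' m = φ := by
    intro m
    calc ∑ n', x n' m = ∑ n', (if m = n' then Y else Z) :=
          Finset.sum_congr rfl fun n' _ => hx n' m
      _ = φ := hsum2 m
  constructor
  · constructor
    · exact hfeas
    · intro n y hy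
      obtain ⟨hy0, hysum⟩ := hy
      -- column sums of the deviated profile
      have hcol' : ∀ m, ∑ n', Function.update x n y n' m = y m + (φ - x n m) := by
        intro m
        have h : ∀ j : Fin N, Function.update x n y j m
            = x j m + (if j = n then y m - x n m else 0) := by
          intro j
          by_cases hj : j = n
          · subst hj; simp [Function.update_self]
          · simp [Function.update_of_ne hj, hj]
        calc ∑ n', Function.update x n y n' m
            = ∑ j, (x j m + (if j = n then y m - x n m else 0)) :=
              Finset.sum_congr rfl fun j _ => h j
          _ = φ + (y m - x n m) := by
              rw [Finset.sum_add_distrib, hcol m,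
                Finset.sum_ite_eq' univ n (fun _ => y m - x n m)]
              simp
          _ = y m + (φ - x n m) := by ring
      have hcost1 : costV N a (fun _ => q) x n
          = ∑ m, x n m * (a * φ + (if m = n then 0 else q)) := by
        unfold costV
        exact Finset.sum_congr rfl fun m _ => by rw [hcol m]
      have hcost2 : costV N a (fun _ => q) (Function.update x n y) n
          = ∑ m, y m * (a * (y m + (φ - x n m)) + (if m = n then 0 else q)) := by
        unfold costV
        refine Finset.sum_congr rfl fun m _ => ?_
        rw [hcol' m, Function.update_self]
      rw [hcost1, hcost2]
      have hxsum : ∑ m, x n m = φ := (hfeas n).2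
      have key : ∑ m, y m * (a * (y m + (φ - x n m)) + (if m = n then 0 else q))
          - ∑ m, x n m * (a * φ + (if m = n then 0 else q))
          = a * ∑ m, (y m - x n m)^2
            + (a * φ + a * Y) * (∑ m, y m - ∑ m, x n m) := by
        rw [← Finset.sum_sub_distrib, Finset.mul_sum, ← Finset.sum_sub_distrib,
          Finset.mul_sum, ← Finset.sum_add_distrib]
        refine Finset.sum_congr rfl fun m _ => ?_
        by_cases hm : m = n
        · have hxm : x n m = Y := by rw [hx, if_pos hm]
          rw [hxm, if_pos hm]; ring
        · have hxm : x n m = Z := by rw [hx, if_neg hm]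
          rw [hxm, if_neg hm, hq']; ring
      have hsq : 0 ≤ ∑ m, (y m - x n m)^2 :=
        Finset.sum_nonneg fun m _ => sq_nonneg _
      have hzero : ∑ m, y m - ∑ m, x n m = 0 := by rw [hysum, hxsum]; ring
      rw [hzero, mul_zero, add_zero] at key
      have h2 : 0 ≤ a * ∑ m, (y m - x n m)^2 := mul_nonneg ha.le hsq
      linarith
  · have hD : (0:ℝ) < 3 * (N:ℝ) - 1 := by linarith
    have hDne : (3 * (N:ℝ) - 1) ≠ 0 := ne_of_gt hD
    refine ⟨?_, ?_, ?_, ?_⟩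
    · apply div_nonneg _ hD.le
      positivity
    · rw [div_le_iff₀ hD]; nlinarith
    · field_simp
    · have hD' : (N:ℝ) * 3 - 1 ≠ 0 := by rw [mul_comm]; exact hDne
      field_simp; ring
end

section
/- Consider the agreement congestion game with N ≥ 3 subscribers and N content providers, demand φ > 0 and congestion parameter a > 0, where CP 1 charges price p ≥ 0 to its non-associated subscribers and every other CP charges q ≥ 0 to its non-associated subscribers. Set δ = p − q and define: y = (φ + (N−1)q/a)/N + (N−1)²·δ/(a·N·(N+1)) (flow of subscriber 1 to CP 1), x = (φ − q/a)/N − (N−1)·δ/(a·N·(N+1)) (flow of subscriber 1 to each CP m ≠ 1), u = (φ − q/a)/N − 2(N−1)·δ/(a·N·(N+1)) (flow of each subscriber n ≠ 1 to CP 1), v = (φ + (N−1)q/a)/N + 2δ/(a·N·(N+1)) (flow of each subscriber n ≠ 1 to its own CP n), and w = (φ − q/a)/N + 2δ/(a·N·(N+1)) (flow of each subscriber n ≠ 1 to each CP m ∉ {1, n}). If x, y, u, v, w are all nonnegative, then this profile is a Nash equilibrium of the agreement congestion game. -/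
open Finset

lemma sum_ite_one {N : ℕ} (i : Fin N) (b c : ℝ) :
    ∑ n : Fin N, (if n = i then b else c) = b + ((N : ℝ) - 1) * c := by
  have h : ∀ n : Fin N, (if n = i then b else c) = (if n = i then b - c else 0) + c := by
    intro n; split <;> ring
  simp only [h]
  rw [Finset.sum_add_distrib, Finset.sum_ite_eq' univ i fun _ => b - c, if_pos (mem_univ i),
    Finset.sum_const, card_univ, Fintype.card_fin, nsmul_eq_mul]
  ring

lemma sum_ite_two {N : ℕ} {i j : Fin N} (hij : i ≠ j) (b d c : ℝ) :
    ∑ n : Fin N, (if n = i then b else if n = j then d else c)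
      = b + d + ((N : ℝ) - 2) * c := by
  have h : ∀ n : Fin N, (if n = i then b else if n = j then d else c)
      = (if n = i then b - c else 0) + ((if n = j then d - c else 0) + c) := by
    intro n
    by_cases h1 : n = i
    · subst h1; rw [if_pos rfl, if_pos rfl, if_neg hij]; ring
    · by_cases h2 : n = j
      · subst h2; rw [if_neg h1, if_pos rfl, if_neg h1, if_pos rfl]; ring
      · rw [if_neg h1, if_neg h2, if_neg h1, if_neg h2]; ring
  simp only [h]
  rw [Finset.sum_add_distrib, Finset.sum_add_distrib,
    Finset.sum_ite_eq' univ i fun _ => b - c, if_pos (mem_univ i),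
    Finset.sum_ite_eq' univ j fun _ => d - c, if_pos (mem_univ j),
    Finset.sum_const, card_univ, Fintype.card_fin, nsmul_eq_mul]
  ring

lemma keyKKT {M : ℕ} (a lam : ℝ) (ha : 0 ≤ a) (c xv yv : Fin M → ℝ)
    (hsum : ∑ m, xv m = ∑ m, yv m)
    (h : ∀ m, a * xv m + (a * xv m + c m) = lam) :
    ∑ m, xv m * (a * xv m + c m) ≤ ∑ m, yv m * (a * yv m + c m) := by
  have h1 : ∀ m : Fin M, yv m * (a * yv m + c m)
      = xv m * (a * xv m + c m) + a * (yv m - xv m) ^ 2 + lam * (yv m - xv m) := by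
    intro m
    have hc : c m = lam - a * xv m - a * xv m := by linarith [h m]
    rw [hc]; ring
  simp only [h1]
  rw [Finset.sum_add_distrib, Finset.sum_add_distrib]
  have h3 : ∑ m : Fin M, lam * (yv m - xv m) = 0 := by
    rw [← Finset.mul_sum, Finset.sum_sub_distrib, ← hsum, sub_self, mul_zero]
  have h4 : 0 ≤ ∑ m : Fin M, a * (yv m - xv m) ^ 2 :=
    Finset.sum_nonneg fun m _ => mul_nonneg ha (sq_nonneg _)
  linarith

lemma costV_eq (N : ℕ) (a : ℝ) (p : Fin N → ℝ) (x : Fin N → Fin N → ℝ) (n : Fin N) :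
    costV N a p x n = ∑ m, x n m * (a * x n m +
      (a * (∑ n' ∈ univ.erase n, x n' m) + if m = n then 0 else p m)) := by
  unfold costV
  refine Finset.sum_congr rfl fun m _ => ?_
  rw [← Finset.add_sum_erase _ _ (mem_univ n)]
  ring

lemma costV_update_eq (N : ℕ) (a : ℝ) (p : Fin N → ℝ) (x : Fin N → Fin N → ℝ)
    (n : Fin N) (yv : Fin N → ℝ) :
    costV N a p (Function.update x n yv) n = ∑ m, yv m * (a * yv m +
      (a * (∑ n' ∈ univ.erase n, x n' m) + if m = n then 0 else p m)) := by
  rw [costV_eq]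
  refine Finset.sum_congr rfl fun m _ => ?_
  have h2 : ∑ n' ∈ univ.erase n, Function.update x n yv n' m
      = ∑ n' ∈ univ.erase n, x n' m := by
    refine Finset.sum_congr rfl fun n' hn' => ?_
    rw [Function.update_of_ne (Finset.ne_of_mem_erase hn')]
  rw [Function.update_self, h2]

set_option maxHeartbeats 2000000 in
lemma stmt7_aux (N : ℕ) (hN : 3 ≤ N) (φ a p q : ℝ)
    (hφ : 0 < φ) (ha : 0 < a) (hp : 0 ≤ p) (hq : 0 ≤ q)
    (δ y x u v w : ℝ)
    (hδ : δ = p - q)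
    (hy : y = (φ + ((N : ℝ) - 1) * q / a) / N +
        ((N : ℝ) - 1) ^ 2 * δ / (a * (N : ℝ) * ((N : ℝ) + 1)))
    (hx : x = (φ - q / a) / N - ((N : ℝ) - 1) * δ / (a * (N : ℝ) * ((N : ℝ) + 1)))
    (hu : u = (φ - q / a) / N - 2 * ((N : ℝ) - 1) * δ / (a * (N : ℝ) * ((N : ℝ) + 1)))
    (hv : v = (φ + ((N : ℝ) - 1) * q / a) / N + 2 * δ / (a * (N : ℝ) * ((N : ℝ) + 1)))
    (hw : w = (φ - q / a) / N + 2 * δ / (a * (N : ℝ) * ((N : ℝ) + 1)))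
    (hy0 : 0 ≤ y) (hx0 : 0 ≤ x) (hu0 : 0 ≤ u) (hv0 : 0 ≤ v) (hw0 : 0 ≤ w)
    (z0 : Fin N) :
    IsNashV N φ a
      (fun m => if m = z0 then p else q)
      (fun n m =>
        if n = z0 then (if m = z0 then y else x)
        else if m = z0 then u
        else if m = n then v
        else w) := by
  have hN3 : (3 : ℝ) ≤ (N : ℝ) := by exact_mod_cast hN
  have hN0 : (N : ℝ) ≠ 0 := by linarith
  have hN1 : (N : ℝ) + 1 ≠ 0 := by linarith
  have ha' : a ≠ 0 := ne_of_gt ha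
  subst hδ
  set X : Fin N → Fin N → ℝ := fun n m =>
    if n = z0 then (if m = z0 then y else x)
    else if m = z0 then u
    else if m = n then v
    else w with hX
  -- pointwise descriptions
  have hX1 : ∀ m, X z0 m = if m = z0 then y else x := by
    intro m; simp only [hX, if_pos rfl]
  have hX2 : ∀ n, n ≠ z0 → ∀ m, X n m = if m = z0 then u else if m = n then v else w := by
    intro n hn m; simp only [hX, if_neg hn]
  -- totals
  have hT1 : ∑ n' : Fin N, X n' z0 = y + ((N : ℝ) - 1) * u := by
    have hpt : ∀ n' : Fin N, X n' z0 = if n' = z0 then y else u := by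
      intro n'
      by_cases h : n' = z0
      · subst h; simp [hX1]
      · simp [hX2 n' h, h]
    rw [Finset.sum_congr rfl fun n' _ => hpt n', sum_ite_one]
  have hT2 : ∀ m : Fin N, m ≠ z0 →
      ∑ n' : Fin N, X n' m = x + v + ((N : ℝ) - 2) * w := by
    intro m hm
    have hpt : ∀ n' : Fin N, X n' m = if n' = z0 then x else if n' = m then v else w := by
      intro n'
      by_cases h : n' = z0
      · subst h; simp [hX1, hm]
      · by_cases h2 : n' = m
        · subst h2; simp [hX2 n' h, hm, h]
        · have h3 : m ≠ n' := fun hh => h2 hh.symm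
          simp [hX2 n' h, hm, h, h2, h3]
    rw [Finset.sum_congr rfl fun n' _ => hpt n',
      sum_ite_two (fun hh : z0 = m => hm hh.symm)]
  -- feasibility
  have hfeas : ∀ n, Feasible N φ (X n) := by
    intro n
    by_cases hn : n = z0
    · subst hn
      constructor
      · intro m; rw [hX1]; split <;> assumption
      · rw [Finset.sum_congr rfl fun m _ => hX1 m, sum_ite_one]
        simp only [hy, hx, hu, hv, hw]; field_simp; ring
    · constructor
      · intro m; rw [hX2 n hn]; split
        · exact hu0
        · split
          · exact hv0
          · exact hw0
      · have hpt : ∀ m : Fin N, X n m = if m = z0 then u else if m = n then v else w :=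
          hX2 n hn
        rw [Finset.sum_congr rfl fun m _ => hpt m,
          sum_ite_two (fun hh : z0 = n => hn hh.symm)]
        simp only [hy, hx, hu, hv, hw]; field_simp; ring
  refine ⟨hfeas, ?_⟩
  intro n yv hyv
  rw [costV_eq, costV_update_eq]
  have hsum : ∑ m, X n m = ∑ m, yv m := by rw [hyv.2, (hfeas n).2]
  have herase : ∀ m : Fin N, ∑ n' ∈ univ.erase n, X n' m
      = (∑ n' : Fin N, X n' m) - X n m := by
    intro m
    rw [← Finset.add_sum_erase univ (fun n' => X n' m) (mem_univ n)]
    ring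
  by_cases hn : n = z0
  · refine keyKKT a (a * ((N : ℝ) + 1) * φ / N + ((N : ℝ) - 1) * q / N) ha.le _ _ _ hsum ?_
    intro m
    rw [herase m]
    by_cases hm : m = z0
    · simp only [hn, hm, hT1, hX1, if_pos]
      simp only [hy, hx, hu, hv, hw]; field_simp; ring
    · simp [hn, hm, hX1, hT2 m hm]
      simp only [hy, hx, hu, hv, hw]; field_simp; ring
  · refine keyKKT a (a * ((N : ℝ) + 1) * φ / N + ((N : ℝ) - 1) * q / N + (p - q) / N)
      ha.le _ _ _ hsum ?_
    intro m
    rw [herase m]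
    by_cases hm : m = z0
    · simp [hm, hX2 n hn, hT1, Ne.symm hn]
      simp only [hy, hx, hu, hv, hw]; field_simp; ring
    · by_cases hm2 : m = n
      · simp [hm2, hX2 n hn, hn, hT2 n hn]
        simp only [hy, hx, hu, hv, hw]; field_simp; ring
      · simp [hX2 n hn, hm, hm2, hT2 m hm]
        simp only [hy, hx, hu, hv, hw]; field_simp; ring

/-- with CP 1 charging `p` to its non-associated subscribers and every other
CP charging `q`, the profile given by the stated flows `y, x, u, v, w` (with `δ = p − q`),
provided they are nonnegative, is a Nash equilibrium of the agreement congestion game. -/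
theorem stmt7 (N : ℕ) (hN : 3 ≤ N) (φ a p q : ℝ)
    (hφ : 0 < φ) (ha : 0 < a) (hp : 0 ≤ p) (hq : 0 ≤ q)
    (δ y x u v w : ℝ)
    (hδ : δ = p - q)
    (hy : y = (φ + ((N : ℝ) - 1) * q / a) / N +
        ((N : ℝ) - 1) ^ 2 * δ / (a * (N : ℝ) * ((N : ℝ) + 1)))
    (hx : x = (φ - q / a) / N - ((N : ℝ) - 1) * δ / (a * (N : ℝ) * ((N : ℝ) + 1)))
    (hu : u = (φ - q / a) / N - 2 * ((N : ℝ) - 1) * δ / (a * (N : ℝ) * ((N : ℝ) + 1)))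
    (hv : v = (φ + ((N : ℝ) - 1) * q / a) / N + 2 * δ / (a * (N : ℝ) * ((N : ℝ) + 1)))
    (hw : w = (φ - q / a) / N + 2 * δ / (a * (N : ℝ) * ((N : ℝ) + 1)))
    (hy0 : 0 ≤ y) (hx0 : 0 ≤ x) (hu0 : 0 ≤ u) (hv0 : 0 ≤ v) (hw0 : 0 ≤ w) :
    IsNashV N φ a
      (fun m => if m = (⟨0, by omega⟩ : Fin N) then p else q)
      (fun n m =>
        if n = (⟨0, by omega⟩ : Fin N) then
          (if m = (⟨0, by omega⟩ : Fin N) then y else x)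
        else if m = (⟨0, by omega⟩ : Fin N) then u
        else if m = n then v
        else w) := by
  exact stmt7_aux N hN φ a p q hφ ha hp hq δ y x u v w hδ hy hx hu hv hw
    hy0 hx0 hu0 hv0 hw0 ⟨0, by omega⟩
end

section
/- Let N ≥ 2 be an integer, a > 0, φ > 0, and set q̄ = aφ(N+1)/(3N−1). Define u(p) = (φ − q̄/a)/N − 2(N−1)(p − q̄)/(a·N·(N+1)), the follower-equilibrium flow from each non-associated subscriber to a content provider charging p when all other content providers charge q̄ in the agreement game. Then the revenue function R(p) = p·(N−1)·u(p) attains its maximum over p ∈ [0, ∞) uniquely at p = q̄, i.e., for every p ≥ 0 with p ≠ q̄, p·(N−1)·u(p) < q̄·(N−1)·u(q̄). -/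
/-- Follower-equilibrium flow from each non-associated subscriber to a CP charging `p`
when all other CPs charge `q` in the agreement game. -/
noncomputable def uFlow (N : ℕ) (a φ p q : ℝ) : ℝ :=
  (φ - q / a) / N - 2 * ((N : ℝ) - 1) * (p - q) / (a * (N : ℝ) * ((N : ℝ) + 1))

/-- the deviating CP's revenue `R(p) = p·(N−1)·u(p)` against the symmetric
price `q̄ = aφ(N+1)/(3N−1)` is uniquely maximized over `p ∈ [0, ∞)` at `p = q̄`. -/
theorem stmt8 (N : ℕ) (hN : 2 ≤ N) (a φ : ℝ) (ha : 0 < a) (hφ : 0 < φ)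
    (qbar : ℝ) (hqbar : qbar = a * φ * ((N : ℝ) + 1) / (3 * (N : ℝ) - 1)) :
    ∀ p : ℝ, 0 ≤ p → p ≠ qbar →
      p * ((N : ℝ) - 1) * uFlow N a φ p qbar <
        qbar * ((N : ℝ) - 1) * uFlow N a φ qbar qbar := by
  intro p hp hne
  have hN2 : (2:ℝ) ≤ (N:ℝ) := by exact_mod_cast hN
  have h3 : (0:ℝ) < 3 * (N:ℝ) - 1 := by linarith
  have hNpos : (0:ℝ) < (N:ℝ) := by linarith
  have hN1 : (0:ℝ) < (N:ℝ) + 1 := by linarith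
  have hne2 : p - qbar ≠ 0 := sub_ne_zero.mpr hne
  have hsq : 0 < (p - qbar)^2 := by positivity
  have key : qbar * ((N : ℝ) - 1) * uFlow N a φ qbar qbar
      - p * ((N : ℝ) - 1) * uFlow N a φ p qbar
      = 2 * ((N:ℝ)-1)^2 * (p - qbar)^2 / (a * (N:ℝ) * ((N:ℝ)+1)) := by
    rw [uFlow, uFlow, hqbar]
    have : (N:ℝ) * 3 - 1 ≠ 0 := by intro h; linarith
    field_simp
    ring
  have hpos : 0 < 2 * ((N:ℝ)-1)^2 * (p - qbar)^2 / (a * (N:ℝ) * ((N:ℝ)+1)) := by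
    have : (0:ℝ) < (N:ℝ) - 1 := by linarith
    positivity
  linarith
end

section
/- (Lemma 1.) For every integer N ≥ 2 and all reals a > 0 and φ > 0, the equilibrium subscriber cost with agreements is strictly smaller than without agreements: aφ² + 2aφ²·((N−1)/(3N−1))²·(N+1)/N < aφ²·N. -/
/-- Lemma 1: the equilibrium subscriber cost with agreements is strictly
smaller than without agreements. -/
theorem stmt12 (N : ℕ) (hN : 2 ≤ N) (a φ : ℝ) (ha : 0 < a) (hφ : 0 < φ) :
    a * φ ^ 2 + 2 * a * φ ^ 2 * (((N : ℝ) - 1) / (3 * (N : ℝ) - 1)) ^ 2 * ((N : ℝ) + 1) / N <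
      a * φ ^ 2 * N := by
  have ht : (2 : ℝ) ≤ (N : ℝ) := by exact_mod_cast hN
  set t : ℝ := (N : ℝ) with htdef
  have ht0 : 0 < t := by linarith
  have hd : 0 < 3 * t - 1 := by linarith
  have hap : 0 < a * φ ^ 2 := by positivity
  have key : 1 + 2 * ((t - 1) / (3 * t - 1)) ^ 2 * (t + 1) / t < t := by
    have e : 1 + 2 * ((t - 1) / (3 * t - 1)) ^ 2 * (t + 1) / t
        = ((3 * t - 1) ^ 2 * t + 2 * (t - 1) ^ 2 * (t + 1)) / ((3 * t - 1) ^ 2 * t) := by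
      field_simp
      rw [add_div, mul_div_cancel_right₀ _ (pow_ne_zero 2 (by linarith))]
    rw [e, div_lt_iff₀ (by positivity : (0:ℝ) < (3 * t - 1) ^ 2 * t)]
    nlinarith [sq_nonneg (t - 2), mul_pos ht0 hd, sq_nonneg (t * (3 * t - 1))]
  calc a * φ ^ 2 + 2 * a * φ ^ 2 * ((t - 1) / (3 * t - 1)) ^ 2 * (t + 1) / t
      = a * φ ^ 2 * (1 + 2 * ((t - 1) / (3 * t - 1)) ^ 2 * (t + 1) / t) := by ring
    _ < a * φ ^ 2 * t := by exact (mul_lt_mul_iff_right₀ hap).mpr key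
end

section
/- (Lemma 2.) For every integer N ≥ 2 and all reals a > 0 and φ > 0, the equilibrium revenue of each content provider with agreements is strictly smaller than without agreements: 2aφ²·((N−1)/(3N−1))²·(N+1)/N < (N−1)·aφ². -/
lemma stmt13_key (n : ℝ) (hn : 2 ≤ n) :
    2 * (n - 1) ^ 2 * (n + 1) < (n - 1) * ((3 * n - 1) ^ 2 * n) := by
  nlinarith [sq_nonneg n, sq_nonneg (n - 1), sq_nonneg (n - 2)]

/-- Lemma 2: the equilibrium revenue of each content provider with
agreements is strictly smaller than without agreements. -/
theorem stmt13 (N : ℕ) (hN : 2 ≤ N) (a φ : ℝ) (ha : 0 < a) (hφ : 0 < φ) :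
    2 * a * φ ^ 2 * (((N : ℝ) - 1) / (3 * (N : ℝ) - 1)) ^ 2 * ((N : ℝ) + 1) / N <
      ((N : ℝ) - 1) * a * φ ^ 2 := by
  have hn : (2 : ℝ) ≤ (N : ℝ) := by exact_mod_cast hN
  have h3 : (0 : ℝ) < 3 * (N : ℝ) - 1 := by linarith
  have hN0 : (0 : ℝ) < (N : ℝ) := by linarith
  have hd : (0 : ℝ) < (3 * (N : ℝ) - 1) ^ 2 * N := by positivity
  have haφ : (0 : ℝ) < a * φ ^ 2 := by positivity
  have key := stmt13_key (N : ℝ) hn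
  have h2 : a * φ ^ 2 * (2 * ((N : ℝ) - 1) ^ 2 * ((N : ℝ) + 1)) <
      a * φ ^ 2 * (((N : ℝ) - 1) * ((3 * (N : ℝ) - 1) ^ 2 * N)) :=
    mul_lt_mul_of_pos_left key haφ
  rw [div_pow, div_lt_iff₀ hN0, ← mul_div_assoc, div_mul_eq_mul_div,
    div_lt_iff₀ (by positivity : (0:ℝ) < (3 * (N:ℝ) - 1) ^ 2)]
  nlinarith [h2]
end

section
/- Let φ > 0 and, for each integer N ≥ 1, let ȳ(N) = (φ/N)·(1 + (N−1)(N+1)/(3N−1)) be the equilibrium download traffic from the privileged (associated) content provider in the agreement game. Then ȳ(N) > φ/3 for every N ≥ 1, and ȳ(N) converges to φ/3 as N → ∞; in particular each content provider is guaranteed a strictly positive amount of traffic bounded away from 0, whereas without agreements the per-subscriber equilibrium flow φ/M tends to 0 as the number M of content providers tends to infinity. -/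
open Filter

/-- the equilibrium download traffic `ȳ(N) = (φ/N)(1 + (N−1)(N+1)/(3N−1))`
from the privileged CP in the agreement game satisfies `ȳ(N) > φ/3` for every `N ≥ 1` and
converges to `φ/3` as `N → ∞`; in contrast, without agreements the per-subscriber
equilibrium flow `φ/M` tends to `0` as the number `M` of content providers tends to
infinity. -/
theorem stmt14 (φ : ℝ) (hφ : 0 < φ) :
    (∀ N : ℕ, 1 ≤ N →
      (φ / N) * (1 + ((N : ℝ) - 1) * ((N : ℝ) + 1) / (3 * (N : ℝ) - 1)) > φ / 3) ∧
    Tendsto (fun N : ℕ =>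
        (φ / N) * (1 + ((N : ℝ) - 1) * ((N : ℝ) + 1) / (3 * (N : ℝ) - 1)))
      atTop (nhds (φ / 3)) ∧
    Tendsto (fun M : ℕ => φ / (M : ℝ)) atTop (nhds 0) := by
  have h1 : Tendsto (fun N : ℕ => (1 : ℝ) / N) atTop (nhds 0) :=
    tendsto_one_div_atTop_nhds_zero_nat
  refine ⟨?_, ?_, ?_⟩
  · intro N hN
    have hN1 : (1 : ℝ) ≤ (N : ℝ) := by exact_mod_cast hN
    have hNpos : (0 : ℝ) < N := by linarith
    have hden : (0 : ℝ) < 3 * (N : ℝ) - 1 := by linarith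
    rw [gt_iff_lt, div_mul_eq_mul_div, div_lt_div_iff₀ (by norm_num) hNpos,
      ← sub_pos]
    have key : φ * (1 + ((N : ℝ) - 1) * ((N : ℝ) + 1) / (3 * (N : ℝ) - 1)) * 3 - φ * N
        = φ * (10 * (N : ℝ) - 6) / (3 * (N : ℝ) - 1) := by
      rw [one_add_div hden.ne']
      field_simp
      ring
    rw [key]
    apply div_pos
    · nlinarith
    · exact hden
  · have hmain : Tendsto (fun N : ℕ =>
        φ * (1 + 3 * ((1:ℝ)/N) - 2 * ((1:ℝ)/N) * ((1:ℝ)/N)) / (3 - (1:ℝ)/N))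
        atTop (nhds (φ / 3)) := by
      have hnum : Tendsto (fun N : ℕ =>
          φ * (1 + 3 * ((1:ℝ)/N) - 2 * ((1:ℝ)/N) * ((1:ℝ)/N))) atTop
          (nhds (φ * (1 + 3 * 0 - 2 * 0 * 0))) :=
        ((tendsto_const_nhds.add (h1.const_mul 3)).sub
          ((h1.const_mul 2).mul h1)).const_mul φ
      have hden : Tendsto (fun N : ℕ => 3 - (1:ℝ)/N) atTop (nhds (3 - 0)) :=
        tendsto_const_nhds.sub h1
      have := hnum.div hden (by norm_num)
      rw [show φ / 3 = φ * (1 + 3 * 0 - 2 * 0 * 0) / (3 - 0) by norm_num]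
      exact this
    refine hmain.congr' ?_
    filter_upwards [eventually_ge_atTop 1] with N hN
    have hN1 : (1 : ℝ) ≤ (N : ℝ) := by exact_mod_cast hN
    have hNpos : (0 : ℝ) < N := by linarith
    have hden : (3 : ℝ) * (N : ℝ) - 1 ≠ 0 := by nlinarith
    field_simp
    ring
  · simpa using h1.const_mul φ |>.congr (fun M => by rw [mul_one_div])
end
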